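/- For every positive integer n, the number of alternating permutations of length 2n avoiding 12345 equals the number of alternating permutations of length 2n avoiding 12354. -/
import Mathlib


open Function

def Contains {n k : ℕ} (p : Fin n → Fin n) (q : Fin k → Fin k) : Prop :=
  ∃ f : Fin k → Fin n, StrictMono f ∧ ∀ a b : Fin k, q a < q b ↔ p (f a) < p (f b)

def Avoids {n k : ℕ} (p : Fin n → Fin n) (q : Fin k → Fin k) : Prop :=
  ¬ Contains p q

noncomputable def rank {n : ℕ} (p : Fin n → Fin n) (i : Fin n) : ℕ :=
  sSup {m | ∃ f : Fin m → Fin n, StrictMono f ∧ StrictMono (p ∘ f) ∧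
    ∃ hm : 0 < m, f ⟨m - 1, Nat.sub_lt hm Nat.one_pos⟩ = i}

noncomputable def corank {n : ℕ} (p : Fin n → Fin n) (i : Fin n) : ℕ :=
  sSup {m | ∃ f : Fin m → Fin n, StrictMono f ∧ StrictMono (p ∘ f) ∧
    ∃ hm : 0 < m, f ⟨0, hm⟩ = i}

def Alternating {n : ℕ} (p : Fin n → Fin n) : Prop :=
  ∀ (i : ℕ) (h : i + 1 < n), p ⟨i, by omega⟩ < p ⟨i + 1, h⟩ ↔ i % 2 = 0

def IsPeak {n : ℕ} (p : Fin n → Fin n) (i : Fin n) : Prop :=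
  (∀ _ : 0 < i.1, p ⟨i.1 - 1, lt_of_le_of_lt (Nat.sub_le _ _) i.2⟩ < p i) ∧
  (∀ h : i.1 + 1 < n, p ⟨i.1 + 1, h⟩ < p i)

def IsValley {n : ℕ} (p : Fin n → Fin n) (i : Fin n) : Prop :=
  (∀ _ : 0 < i.1, p i < p ⟨i.1 - 1, lt_of_le_of_lt (Nat.sub_le _ _) i.2⟩) ∧
  (∀ h : i.1 + 1 < n, p i < p ⟨i.1 + 1, h⟩)

-- Main development
namespace Lewis

variable {N : ℕ}

def Sh (p : Fin N → Fin N) (i : Fin N) (v : ℕ) : Prop :=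
  ∃ a b c : Fin N, a < b ∧ b < c ∧ c < i ∧ p a < p b ∧ p b < p c ∧ (p c : ℕ) < v

def Ins (p : Fin N → Fin N) (i : Fin N) : Prop := Sh p i ((p i : ℕ))

lemma Sh.mono {p : Fin N → Fin N} {i j : Fin N} {v w : ℕ}
    (hij : i ≤ j) (hvw : v ≤ w) (h : Sh p i v) : Sh p j w := by
  obtain ⟨a, b, c, h1, h2, h3, h4, h5, h6⟩ := h
  exact ⟨a, b, c, h1, h2, lt_of_lt_of_le h3 hij, h4, h5, lt_of_lt_of_le h6 hvw⟩

lemma strictMono5 {a b c d e : Fin N} (h1 : a < b) (h2 : b < c) (h3 : c < d) (h4 : d < e) :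
    StrictMono (![a, b, c, d, e] : Fin 5 → Fin N) := by
  have t02 := h1.trans h2
  have t03 := t02.trans h3
  have t04 := t03.trans h4
  have t13 := h2.trans h3
  have t14 := t13.trans h4
  have t24 := h3.trans h4
  intro x y hxy
  fin_cases x <;> fin_cases y <;> first
    | exact absurd hxy (by decide)
    | (simp only [Matrix.cons_val', Matrix.cons_val_zero, Matrix.cons_val_one, Matrix.head_cons,
        Matrix.cons_val_two, Matrix.tail_cons, Matrix.cons_val_three, Matrix.cons_val_four,
        Matrix.head_fin_const, Matrix.cons_val_fin_one]
       assumption)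

lemma iff_of_mono5 {q : Fin 5 → Fin 5} (hq : Function.Injective q) {g : Fin 5 → Fin N}
    (H : ∀ x y, q x < q y → g x < g y) : ∀ x y, q x < q y ↔ g x < g y := by
  intro x y
  refine ⟨H x y, fun hg => ?_⟩
  rcases lt_trichotomy (q x) (q y) with h | h | h
  · exact h
  · exact absurd hg (by rw [hq h]; exact lt_irrefl _)
  · exact absurd (H y x h) (lt_asymm hg)

lemma containsA_iff (p : Fin N → Fin N) :
    Contains p (![0, 1, 2, 3, 4] : Fin 5 → Fin 5) ↔
      ∃ i j : Fin N, i < j ∧ p i < p j ∧ Ins p i := by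
  constructor
  · rintro ⟨f, hmono, hiff⟩
    refine ⟨f 3, f 4, hmono (by decide), (hiff 3 4).mp (by decide),
      f 0, f 1, f 2, hmono (by decide), hmono (by decide), hmono (by decide),
      (hiff 0 1).mp (by decide), (hiff 1 2).mp (by decide),
      Fin.lt_def.mp ((hiff 2 3).mp (by decide))⟩
  · rintro ⟨i, j, hij, hpij, a, b, c, hab, hbc, hci, pab, pbc, pci⟩
    refine ⟨![a, b, c, i, j], strictMono5 hab hbc hci hij, ?_⟩
    have f23 : p c < p i := Fin.lt_def.mpr pci
    have f02 := pab.trans pbc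
    have f03 := f02.trans f23
    have f04 := f03.trans hpij
    have f13 := pbc.trans f23
    have f14 := f13.trans hpij
    have f24 := f23.trans hpij
    apply iff_of_mono5 (by decide)
    intro x y hxy
    fin_cases x <;> fin_cases y <;> first
      | exact absurd hxy (by decide)
      | (simp only [Matrix.cons_val', Matrix.cons_val_zero, Matrix.cons_val_one, Matrix.head_cons,
          Matrix.cons_val_two, Matrix.tail_cons, Matrix.cons_val_three, Matrix.cons_val_four,
          Matrix.head_fin_const, Matrix.cons_val_fin_one]
         assumption)

lemma containsB_iff (p : Fin N → Fin N) :
    Contains p (![0, 1, 2, 4, 3] : Fin 5 → Fin 5) ↔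
      ∃ i j : Fin N, i < j ∧ p j < p i ∧ Sh p i ((p j : ℕ)) := by
  constructor
  · rintro ⟨f, hmono, hiff⟩
    refine ⟨f 3, f 4, hmono (by decide), (hiff 4 3).mp (by decide),
      f 0, f 1, f 2, hmono (by decide), hmono (by decide), hmono (by decide),
      (hiff 0 1).mp (by decide), (hiff 1 2).mp (by decide),
      Fin.lt_def.mp ((hiff 2 4).mp (by decide))⟩
  · rintro ⟨i, j, hij, hpij, a, b, c, hab, hbc, hci, pab, pbc, pcj⟩
    refine ⟨![a, b, c, i, j], strictMono5 hab hbc hci hij, ?_⟩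
    have f24 : p c < p j := Fin.lt_def.mpr pcj
    have f43 : p j < p i := hpij
    have f02 := pab.trans pbc
    have f04 := f02.trans f24
    have f03 := f04.trans f43
    have f14 := pbc.trans f24
    have f13 := f14.trans f43
    have f23 := f24.trans f43
    apply iff_of_mono5 (by decide)
    intro x y hxy
    fin_cases x <;> fin_cases y <;> first
      | exact absurd hxy (by decide)
      | (simp only [Matrix.cons_val', Matrix.cons_val_zero, Matrix.cons_val_one, Matrix.head_cons,
          Matrix.cons_val_two, Matrix.tail_cons, Matrix.cons_val_three, Matrix.cons_val_four,
          Matrix.head_fin_const, Matrix.cons_val_fin_one]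
         assumption)



lemma sh_out {p : Fin N → Fin N} :
    ∀ v, ∀ i : Fin N, Sh p i v → ∃ a b c : Fin N, ¬ Ins p a ∧ ¬ Ins p b ∧ ¬ Ins p c ∧
      a < b ∧ b < c ∧ c < i ∧ p a < p b ∧ p b < p c ∧ (p c : ℕ) < v := by
  intro v
  induction v using Nat.strong_induction_on with
  | _ v ih =>
    rintro i ⟨a, b, c, hab, hbc, hci, pab, pbc, hv⟩
    by_cases hc : Ins p c
    · obtain ⟨a', b', c', n1, n2, n3, h1, h2, h3, h4, h5, h6⟩ := ih _ hv c hc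
      exact ⟨a', b', c', n1, n2, n3, h1, h2, h3.trans hci, h4, h5, h6.trans hv⟩
    by_cases hb : Ins p b
    · have hbv : ((p b : ℕ)) < v := (Fin.lt_def.mp pbc).trans hv
      obtain ⟨a', b', c', n1, n2, n3, h1, h2, h3, h4, h5, h6⟩ := ih _ hbv b hb
      exact ⟨a', b', c', n1, n2, n3, h1, h2, (h3.trans hbc).trans hci, h4, h5, h6.trans hbv⟩
    by_cases ha : Ins p a
    · have hav : ((p a : ℕ)) < v := ((Fin.lt_def.mp pab).trans (Fin.lt_def.mp pbc)).trans hv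
      obtain ⟨a', b', c', n1, n2, n3, h1, h2, h3, h4, h5, h6⟩ := ih _ hav a ha
      exact ⟨a', b', c', n1, n2, n3, h1, h2, ((h3.trans hab).trans hbc).trans hci, h4, h5, h6.trans hav⟩
    · exact ⟨a, b, c, ha, hb, hc, hab, hbc, hci, pab, pbc, hv⟩

def Compat (p w : Fin N → Fin N) : Prop :=
  Function.Bijective w ∧ (∀ i, ¬ Ins p i → w i = p i) ∧ (∀ i, Ins p i → Sh p i ((w i : ℕ)))

lemma compat_self {p : Fin N → Fin N} (hp : Function.Bijective p) : Compat p p :=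
  ⟨hp, fun _ _ => rfl, fun _ h => h⟩

lemma sh_compat {p w : Fin N → Fin N} (h : Compat p w) (i : Fin N) (v : ℕ) :
    Sh w i v ↔ Sh p i v := by
  constructor
  · rintro ⟨a, b, c, hab, hbc, hci, wab, wbc, hv⟩
    by_cases hc : Ins p c
    · obtain ⟨a', b', c', h1, h2, h3, h4, h5, h6⟩ := h.2.2 c hc
      exact ⟨a', b', c', h1, h2, h3.trans hci, h4, h5, h6.trans hv⟩
    · have hwc : w c = p c := h.2.1 c hc
      by_cases hb : Ins p b
      · obtain ⟨a', b', c', h1, h2, h3, h4, h5, h6⟩ := h.2.2 b hb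
        refine ⟨a', b', c', h1, h2, (h3.trans hbc).trans hci, h4, h5, ?_⟩
        have : ((w b : ℕ)) < ((w c : ℕ)) := Fin.lt_def.mp wbc
        omega
      · have hwb : w b = p b := h.2.1 b hb
        by_cases ha : Ins p a
        · obtain ⟨a', b', c', h1, h2, h3, h4, h5, h6⟩ := h.2.2 a ha
          refine ⟨a', b', c', h1, h2, ((h3.trans hab).trans hbc).trans hci, h4, h5, ?_⟩
          have v1 : ((w a : ℕ)) < ((w b : ℕ)) := Fin.lt_def.mp wab
          have v2 : ((w b : ℕ)) < ((w c : ℕ)) := Fin.lt_def.mp wbc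
          omega
        · have hwa : w a = p a := h.2.1 a ha
          exact ⟨a, b, c, hab, hbc, hci, by rwa [hwa, hwb] at wab, by rwa [hwb, hwc] at wbc,
            by rwa [hwc] at hv⟩
  · intro hs
    obtain ⟨a, b, c, n1, n2, n3, h1, h2, h3, h4, h5, h6⟩ := sh_out v i hs
    exact ⟨a, b, c, h1, h2, h3, by rwa [h.2.1 a n1, h.2.1 b n2],
      by rwa [h.2.1 b n2, h.2.1 c n3], by rwa [h.2.1 c n3]⟩

lemma ins_compat {p w : Fin N → Fin N} (h : Compat p w) (i : Fin N) :
    Ins w i ↔ Ins p i := by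
  unfold Ins
  rw [sh_compat h]
  by_cases hi : Ins p i
  · exact ⟨fun _ => hi, fun _ => h.2.2 i hi⟩
  · rw [h.2.1 i hi]

lemma compat_iff {p w : Fin N → Fin N} (h : Compat p w) (w' : Fin N → Fin N) :
    Compat w w' ↔ Compat p w' := by
  constructor
  · rintro ⟨h1, h2, h3⟩
    refine ⟨h1, fun i hi => ?_, fun i hi => ?_⟩
    · rw [h2 i (fun hs => hi ((ins_compat h i).mp hs)), h.2.1 i hi]
    · exact (sh_compat h i _).mp (h3 i ((ins_compat h i).mpr hi))
  · rintro ⟨h1, h2, h3⟩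
    refine ⟨h1, fun i hi => ?_, fun i hi => ?_⟩
    · have hi' : ¬ Ins p i := fun hs => hi ((ins_compat h i).mpr hs)
      rw [h2 i hi', h.2.1 i hi']
    · exact (sh_compat h i _).mpr (h3 i ((ins_compat h i).mp hi))

def NoI (p w : Fin N → Fin N) : Prop := ∀ i j : Fin N, i < j → Ins p i → ¬ w i < w j

def NoD (p w : Fin N → Fin N) : Prop := ∀ i j : Fin N, i < j → w j < w i → ¬ Sh p i ((w j : ℕ))

lemma noI_iff {p w : Fin N → Fin N} (h : Compat p w) (w' : Fin N → Fin N) :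
    NoI w w' ↔ NoI p w' := by
  unfold NoI
  constructor
  · intro hn i j hij hi
    exact hn i j hij ((ins_compat h i).mpr hi)
  · intro hn i j hij hi
    exact hn i j hij ((ins_compat h i).mp hi)

lemma noD_iff {p w : Fin N → Fin N} (h : Compat p w) (w' : Fin N → Fin N) :
    NoD w w' ↔ NoD p w' := by
  unfold NoD
  constructor
  · intro hn i j hij hd hs
    exact hn i j hij hd ((sh_compat h i _).mpr hs)
  · intro hn i j hij hd hs
    exact hn i j hij hd ((sh_compat h i _).mp hs)


open Function in
lemma unique_noI {p w1 w2 : Fin N → Fin N} (h1 : Compat p w1) (h2 : Compat p w2)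
    (n1 : NoI p w1) (n2 : NoI p w2) : w1 = w2 := by
  classical
  by_contra hne
  have hTne : (Finset.univ.filter (fun k => w1 k ≠ w2 k)).Nonempty := by
    by_contra h
    apply hne
    funext k
    by_contra hk
    exact h ⟨k, by simp [hk]⟩
  set T := Finset.univ.filter (fun k => w1 k ≠ w2 k) with hT
  set i := T.min' hTne with hi
  have hiT : i ∈ T := T.min'_mem hTne
  have hine : w1 i ≠ w2 i := by simpa [hT] using hiT
  have hmin : ∀ k, k < i → w1 k = w2 k := by
    intro k hk
    by_contra h
    exact absurd (T.min'_le k (by simp [hT, h])) (not_le.mpr hk)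
  have hIns : Ins p i := by
    by_contra h
    exact hine ((h1.2.1 i h).trans (h2.2.1 i h).symm)
  rcases lt_or_gt_of_ne hine with hlt | hlt
  · obtain ⟨j, hj⟩ := h1.1.2 (w2 i)
    have hji : i < j := by
      rcases lt_trichotomy j i with h | h | h
      · exact absurd (h2.1.1 ((hmin j h).symm.trans hj).symm) (ne_of_gt h)
      · exact absurd (show w1 i = w2 i by rw [h] at hj; exact hj) hine
      · exact h
    exact n1 i j hji hIns (hj.symm ▸ hlt)
  · obtain ⟨j, hj⟩ := h2.1.2 (w1 i)
    have hji : i < j := by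
      rcases lt_trichotomy j i with h | h | h
      · exact absurd (h1.1.1 ((hmin j h).trans hj).symm) (ne_of_gt h)
      · exact absurd (show w2 i = w1 i by rw [h] at hj; exact hj) (Ne.symm hine)
      · exact h
    exact n2 i j hji hIns (hj.symm ▸ hlt)

open Function in
lemma unique_noD {p w1 w2 : Fin N → Fin N} (h1 : Compat p w1) (h2 : Compat p w2)
    (n1 : NoD p w1) (n2 : NoD p w2) : w1 = w2 := by
  classical
  by_contra hne
  have hTne : (Finset.univ.filter (fun k => w1 k ≠ w2 k)).Nonempty := by
    by_contra h
    apply hne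
    funext k
    by_contra hk
    exact h ⟨k, by simp [hk]⟩
  set T := Finset.univ.filter (fun k => w1 k ≠ w2 k) with hT
  set i := T.min' hTne with hi
  have hiT : i ∈ T := T.min'_mem hTne
  have hine : w1 i ≠ w2 i := by simpa [hT] using hiT
  have hmin : ∀ k, k < i → w1 k = w2 k := by
    intro k hk
    by_contra h
    exact absurd (T.min'_le k (by simp [hT, h])) (not_le.mpr hk)
  have hIns : Ins p i := by
    by_contra h
    exact hine ((h1.2.1 i h).trans (h2.2.1 i h).symm)
  rcases lt_or_gt_of_ne hine with hlt | hlt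
  · -- w1 i < w2 i ; find j with w2 j = w1 i
    obtain ⟨j, hj⟩ := h2.1.2 (w1 i)
    have hji : i < j := by
      rcases lt_trichotomy j i with h | h | h
      · exact absurd (h1.1.1 ((hmin j h).trans hj).symm) (ne_of_gt h)
      · exact absurd (show w2 i = w1 i by rw [h] at hj; exact hj) (Ne.symm hine)
      · exact h
    exact n2 i j hji (hj.symm ▸ hlt) (hj.symm ▸ h1.2.2 i hIns)
  · obtain ⟨j, hj⟩ := h1.1.2 (w2 i)
    have hji : i < j := by
      rcases lt_trichotomy j i with h | h | h
      · exact absurd (h2.1.1 ((hmin j h).symm.trans hj).symm) (ne_of_gt h)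
      · exact absurd (show w1 i = w2 i by rw [h] at hj; exact hj) hine
      · exact h
    exact n1 i j hji (hj.symm ▸ hlt) (hj.symm ▸ h2.2.2 i hIns)

lemma sum_lt_pair {f g : Fin N → ℕ} {i j : Fin N} (hij : i ≠ j)
    (hoff : ∀ k, k ≠ i → k ≠ j → f k = g k) (h : f i + f j < g i + g j) :
    ∑ k, f k < ∑ k, g k := by
  classical
  have hsub : ({i, j} : Finset (Fin N)) ⊆ Finset.univ := Finset.subset_univ _
  rw [← Finset.sum_sdiff hsub, ← Finset.sum_sdiff hsub, Finset.sum_pair hij, Finset.sum_pair hij]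
  have heq : ∑ k ∈ Finset.univ \ {i, j}, f k = ∑ k ∈ Finset.univ \ {i, j}, g k := by
    refine Finset.sum_congr rfl ?_
    intro k hk
    simp only [Finset.mem_sdiff, Finset.mem_insert, Finset.mem_singleton] at hk
    push_neg at hk
    exact hoff k hk.2.1 hk.2.2
  omega

lemma rearrange_lt {ci cj x y : ℕ} (hc : ci < cj) (hxy : x < y) :
    ci * y + cj * x < ci * x + cj * y := by
  nlinarith

open Function in
lemma exists_noI {p : Fin N → Fin N} (hp : Bijective p) : ∃ w, Compat p w ∧ NoI p w := by
  classical
  obtain ⟨w, hw, hmin⟩ := Set.exists_min_image {w | Compat p w}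
    (fun w => ∑ k : Fin N, (k : ℕ) * ((w k : ℕ))) (Set.toFinite _) ⟨p, compat_self hp⟩
  refine ⟨w, hw, ?_⟩
  intro i j hij hins hlt
  have hvlt : ((w i : ℕ)) < ((w j : ℕ)) := Fin.lt_def.mp hlt
  have hSi : Sh p i ((w i : ℕ)) := hw.2.2 i hins
  have hSj : Ins p j := by
    by_contra hj
    have hwj : w j = p j := hw.2.1 j hj
    exact hj (Sh.mono hij.le (by omega : ((w i : ℕ)) ≤ ((p j : ℕ))) hSi)
  set w' := w ∘ (Equiv.swap i j) with hw'
  have hne : i ≠ j := ne_of_lt hij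
  have hwi' : w' i = w j := by simp [hw', Equiv.swap_apply_left]
  have hwj' : w' j = w i := by simp [hw', Equiv.swap_apply_right]
  have hoff : ∀ k, k ≠ i → k ≠ j → w' k = w k := by
    intro k h1 h2
    simp [hw', Equiv.swap_apply_of_ne_of_ne h1 h2]
  have hcw' : Compat p w' := by
    refine ⟨hw.1.comp (Equiv.swap i j).bijective, fun k hk => ?_, fun k hk => ?_⟩
    · have h1 : k ≠ i := fun h => hk (h ▸ hins)
      have h2 : k ≠ j := fun h => hk (h ▸ hSj)
      rw [hoff k h1 h2, hw.2.1 k hk]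
    · rcases eq_or_ne k i with rfl | h1
      · rw [hwi']
        exact Sh.mono le_rfl (by omega) hSi
      rcases eq_or_ne k j with rfl | h2
      · rw [hwj']
        exact Sh.mono hij.le le_rfl hSi
      · rw [hoff k h1 h2]
        exact hw.2.2 k hk
  have hlt2 : (∑ k : Fin N, (k : ℕ) * ((w' k : ℕ))) < ∑ k : Fin N, (k : ℕ) * ((w k : ℕ)) := by
    refine sum_lt_pair hne (fun k h1 h2 => by rw [hoff k h1 h2]) ?_
    rw [hwi', hwj']
    exact rearrange_lt (Fin.lt_def.mp hij) hvlt
  exact absurd (hmin w' hcw') (not_le.mpr hlt2)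

open Function in
lemma exists_noD {p : Fin N → Fin N} (hp : Bijective p) : ∃ w, Compat p w ∧ NoD p w := by
  classical
  obtain ⟨w, hw, hmin⟩ := Set.exists_min_image {w | Compat p w}
    (fun w => ∑ k : Fin N, (N - (k : ℕ)) * ((w k : ℕ))) (Set.toFinite _) ⟨p, compat_self hp⟩
  refine ⟨w, hw, ?_⟩
  intro i j hij hlt hsh
  have hvlt : ((w j : ℕ)) < ((w i : ℕ)) := Fin.lt_def.mp hlt
  have hSi : Ins p i := by
    by_contra hi
    have hwi : w i = p i := hw.2.1 i hi
    exact hi (Sh.mono le_rfl (by omega : ((w j : ℕ)) ≤ ((p i : ℕ))) hsh)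
  have hSj : Ins p j := by
    by_contra hj
    have hwj : w j = p j := hw.2.1 j hj
    exact hj (Sh.mono hij.le le_rfl (hwj ▸ hsh))
  set w' := w ∘ (Equiv.swap i j) with hw'
  have hne : i ≠ j := ne_of_lt hij
  have hwi' : w' i = w j := by simp [hw', Equiv.swap_apply_left]
  have hwj' : w' j = w i := by simp [hw', Equiv.swap_apply_right]
  have hoff : ∀ k, k ≠ i → k ≠ j → w' k = w k := by
    intro k h1 h2
    simp [hw', Equiv.swap_apply_of_ne_of_ne h1 h2]
  have hcw' : Compat p w' := by
    refine ⟨hw.1.comp (Equiv.swap i j).bijective, fun k hk => ?_, fun k hk => ?_⟩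
    · have h1 : k ≠ i := fun h => hk (h ▸ hSi)
      have h2 : k ≠ j := fun h => hk (h ▸ hSj)
      rw [hoff k h1 h2, hw.2.1 k hk]
    · rcases eq_or_ne k i with rfl | h1
      · rw [hwi']
        exact hsh
      rcases eq_or_ne k j with rfl | h2
      · rw [hwj']
        exact Sh.mono hij.le le_rfl (hw.2.2 i hSi)
      · rw [hoff k h1 h2]
        exact hw.2.2 k hk
  have hlt2 : (∑ k : Fin N, (N - (k : ℕ)) * ((w' k : ℕ))) <
      ∑ k : Fin N, (N - (k : ℕ)) * ((w k : ℕ)) := by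
    refine sum_lt_pair hne (fun k h1 h2 => by rw [hoff k h1 h2]) ?_
    rw [hwi', hwj']
    have hiN : (i : ℕ) < N := i.isLt
    have hjN : (j : ℕ) < N := j.isLt
    have hc : N - (j : ℕ) < N - (i : ℕ) := by
      have := Fin.lt_def.mp hij
      omega
    have := rearrange_lt hc hvlt
    omega
  exact absurd (hmin w' hcw') (not_le.mpr hlt2)

def VU (p : Fin N → Fin N) : Prop := ∀ i : Fin N, (i : ℕ) % 2 = 0 → ¬ Ins p i

lemma avoidsA_iff (p : Fin N → Fin N) :
    Avoids p (![0, 1, 2, 3, 4] : Fin 5 → Fin 5) ↔ NoI p p := by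
  unfold Avoids
  rw [containsA_iff]
  push_neg
  constructor
  · intro h i j hij hins hlt
    exact (h i j hij hlt) hins
  · intro h i j hij hlt hins
    exact (h i j hij hins) hlt

lemma avoidsB_iff (p : Fin N → Fin N) :
    Avoids p (![0, 1, 2, 4, 3] : Fin 5 → Fin 5) ↔ NoD p p := by
  unfold Avoids
  rw [containsB_iff]
  push_neg
  constructor
  · intro h i j hij hlt hsh
    exact (h i j hij hlt) hsh
  · intro h i j hij hlt
    exact (h i j hij hlt)

lemma vu_A {p : Fin N → Fin N} (hN : 2 ∣ N) (halt : Alternating p) (hav : NoI p p) : VU p := by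
  intro i hpar hins
  obtain ⟨m, hm⟩ := hN
  have hiN : (i : ℕ) < N := i.isLt
  have h1 : (i : ℕ) + 1 < N := by omega
  have hij : i < (⟨(i : ℕ) + 1, h1⟩ : Fin N) := by
    rw [Fin.lt_def]; simp
  have hlt : p i < p ⟨(i : ℕ) + 1, h1⟩ := by
    have := (halt (i : ℕ) h1).mpr hpar
    simpa using this
  exact hav i ⟨(i : ℕ) + 1, h1⟩ hij hins hlt

open Function in
lemma vu_B {p : Fin N → Fin N} (hp : Bijective p) (halt : Alternating p) (hav : NoD p p) :
    VU p := by
  intro i hpar hins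
  obtain ⟨a, b, c, hab, hbc, hci, pab, pbc, pci⟩ := hins
  have hc0 : (c : ℕ) < (i : ℕ) := Fin.lt_def.mp hci
  have hi1 : 1 ≤ (i : ℕ) := by omega
  have hiN : (i : ℕ) < N := i.isLt
  have h1 : ((i : ℕ) - 1) + 1 < N := by omega
  set i' : Fin N := ⟨(i : ℕ) - 1, by omega⟩ with hi'
  have hieq : (⟨((i : ℕ) - 1) + 1, h1⟩ : Fin N) = i := Fin.ext (by simp; omega)
  have hnot : ¬ (p i' < p i) := by
    intro hlt
    have h2 := (halt ((i : ℕ) - 1) h1).mp (by rwa [hieq])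
    omega
  have hne : p i ≠ p i' := fun h => by
    have := hp.1 h
    rw [Fin.ext_iff] at this
    simp [hi'] at this
    omega
  have hdesc : p i < p i' := lt_of_le_of_ne (le_of_not_gt hnot) hne
  have hcne : (c : ℕ) ≠ (i : ℕ) - 1 := by
    intro h
    have hc : c = i' := Fin.ext (by simp [hi', h])
    rw [hc] at pci
    have := Fin.lt_def.mp hdesc
    omega
  have hci' : c < i' := by
    rw [Fin.lt_def]
    simp [hi']
    omega
  exact hav i' i (by rw [Fin.lt_def]; simp [hi']; omega) hdesc ⟨a, b, c, hab, hbc, hci', pab, pbc, pci⟩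

open Function in
lemma alt_compat {p w : Fin N → Fin N} (halt : Alternating p) (hvu : VU p)
    (hc : Compat p w) : Alternating w := by
  intro k hk1
  set i : Fin N := ⟨k, by omega⟩ with hidef
  set j : Fin N := ⟨k + 1, hk1⟩ with hjdef
  have hij : i < j := by rw [Fin.lt_def]; simp [hidef, hjdef]
  have hijne : i ≠ j := ne_of_lt hij
  rcases Nat.mod_two_eq_zero_or_one k with hpar | hpar
  · -- k even : valley at i
    have hwi : w i = p i := hc.2.1 i (hvu i hpar)
    have hlt : w i < w j := by
      by_cases hj : Ins p j
      · by_contra hnot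
        have hne : w i ≠ w j := fun h => hijne (hc.1.1 h)
        have hvlt : ((w j : ℕ)) < ((w i : ℕ)) := by
          rcases lt_or_gt_of_ne hne with h | h
          · exact absurd h hnot
          · exact Fin.lt_def.mp h
        obtain ⟨a, b, c, hab, hbc, hcj, pab, pbc, ptop⟩ := hc.2.2 j hj
        have hpc : ((p c : ℕ)) < ((p i : ℕ)) := by rw [← hwi]; omega
        have hcne : c ≠ i := fun h => by rw [h] at hpc; omega
        have hci : c < i := by
          rw [Fin.lt_def]
          have hv1 := Fin.lt_def.mp hcj
          have hv2 : (c : ℕ) ≠ k := fun h => hcne (Fin.ext (by simp [hidef, h]))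
          simp only [hjdef] at hv1
          simp [hidef]
          omega
        exact hvu i hpar ⟨a, b, c, hab, hbc, hci, pab, pbc, hpc⟩
      · have hwj : w j = p j := hc.2.1 j hj
        rw [hwi, hwj]
        exact (halt k hk1).mpr hpar
    exact ⟨fun _ => hpar, fun _ => hlt⟩
  · -- k odd : valley at j
    have hjpar : ((j : ℕ)) % 2 = 0 := by simp [hjdef]; omega
    have hwj : w j = p j := hc.2.1 j (hvu j hjpar)
    have hnot : ¬ (w i < w j) := by
      by_cases hi : Ins p i
      · intro hlt
        have hvlt : ((w i : ℕ)) < ((p j : ℕ)) := by rw [← hwj]; exact Fin.lt_def.mp hlt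
        obtain ⟨a, b, c, hab, hbc, hci, pab, pbc, ptop⟩ := hc.2.2 i hi
        exact hvu j hjpar ⟨a, b, c, hab, hbc, hci.trans hij, pab, pbc, by omega⟩
      · have hwi : w i = p i := hc.2.1 i hi
        intro hlt
        rw [hwi, hwj] at hlt
        have := (halt k hk1).mp hlt
        omega
    exact ⟨fun h => absurd h hnot, fun h => by omega⟩

open Function

noncomputable def toB (p : Fin N → Fin N) (hp : Bijective p) : Fin N → Fin N :=
  Classical.choose (exists_noD hp)

lemma toB_spec {p : Fin N → Fin N} (hp : Bijective p) :
    Compat p (toB p hp) ∧ NoD p (toB p hp) := Classical.choose_spec (exists_noD hp)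

noncomputable def toA (p : Fin N → Fin N) (hp : Bijective p) : Fin N → Fin N :=
  Classical.choose (exists_noI hp)

lemma toA_spec {p : Fin N → Fin N} (hp : Bijective p) :
    Compat p (toA p hp) ∧ NoI p (toA p hp) := Classical.choose_spec (exists_noI hp)

lemma toB_mem {p : Fin N → Fin N} (hN : 2 ∣ N) (hp : Bijective p) (halt : Alternating p)
    (hav : Avoids p (![0, 1, 2, 3, 4] : Fin 5 → Fin 5)) :
    Bijective (toB p hp) ∧ Alternating (toB p hp) ∧
      Avoids (toB p hp) (![0, 1, 2, 4, 3] : Fin 5 → Fin 5) := by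
  obtain ⟨hcompat, hnod⟩ := toB_spec hp
  exact ⟨hcompat.1,
    alt_compat halt (vu_A hN halt ((avoidsA_iff p).mp hav)) hcompat,
    (avoidsB_iff _).mpr ((noD_iff hcompat _).mpr hnod)⟩

lemma toA_mem {p : Fin N → Fin N} (hp : Bijective p) (halt : Alternating p)
    (hav : Avoids p (![0, 1, 2, 4, 3] : Fin 5 → Fin 5)) :
    Bijective (toA p hp) ∧ Alternating (toA p hp) ∧
      Avoids (toA p hp) (![0, 1, 2, 3, 4] : Fin 5 → Fin 5) := by
  obtain ⟨hcompat, hnoi⟩ := toA_spec hp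
  exact ⟨hcompat.1,
    alt_compat halt (vu_B hp halt ((avoidsB_iff p).mp hav)) hcompat,
    (avoidsA_iff _).mpr ((noI_iff hcompat _).mpr hnoi)⟩

theorem main (hN : 2 ∣ N) :
    Nat.card {p : Fin N → Fin N // Bijective p ∧ Alternating p ∧
      Avoids p (![0, 1, 2, 3, 4] : Fin 5 → Fin 5)} =
    Nat.card {p : Fin N → Fin N // Bijective p ∧ Alternating p ∧
      Avoids p (![0, 1, 2, 4, 3] : Fin 5 → Fin 5)} := by
  apply Nat.card_congr
  refine ⟨fun x => ⟨toB x.1 x.2.1, toB_mem hN x.2.1 x.2.2.1 x.2.2.2⟩,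
    fun y => ⟨toA y.1 y.2.1, toA_mem y.2.1 y.2.2.1 y.2.2.2⟩, ?_, ?_⟩
  · rintro ⟨p, hb, halt, hav⟩
    apply Subtype.ext
    dsimp only
    set w := toB p hb with hw
    obtain ⟨hcw, hnod⟩ := toB_spec hb
    have hbw : Bijective w := hcw.1
    obtain ⟨hcww', hnoi⟩ := toA_spec hbw
    exact unique_noI ((compat_iff hcw _).mp hcww') (compat_self hb)
      ((noI_iff hcw _).mp hnoi) ((avoidsA_iff p).mp hav)
  · rintro ⟨p, hb, halt, hav⟩
    apply Subtype.ext
    dsimp only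
    set w := toA p hb with hw
    obtain ⟨hcw, hnoi⟩ := toA_spec hb
    have hbw : Bijective w := hcw.1
    obtain ⟨hcww', hnod⟩ := toB_spec hbw
    exact unique_noD ((compat_iff hcw _).mp hcww') (compat_self hb)
      ((noD_iff hcw _).mp hnod) ((avoidsB_iff p).mp hav)

end Lewis

theorem stmt10 (n : ℕ) (hn : 0 < n) :
    Nat.card {p : Fin (2 * n) → Fin (2 * n) // Function.Bijective p ∧ Alternating p ∧
      Avoids p (![0, 1, 2, 3, 4] : Fin 5 → Fin 5)} =
    Nat.card {p : Fin (2 * n) → Fin (2 * n) // Function.Bijective p ∧ Alternating p ∧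
      Avoids p (![0, 1, 2, 4, 3] : Fin 5 → Fin 5)} :=
  Lewis.main ⟨n, rfl⟩
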